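/- Let Θ(x) = x/|x|_q^d on ℝ^d\{0" } with q = d/(d-1), and define the discrete flow θ on edges of ℤ^d by letting θ(xy), for neighboring x,y ∈ ℤ^d, be the flux of Θ through the unit face S_{xy} of the cube of side 1 centered at x perpendicular to the direction from x to y. Then θ satisfies the node law on ℤ^d \ {0}: for every x ∈ ℤ^d with x ≠ 0, ∑_{y∼x} θ(xy) = 0. -/

import Mathlib

open MeasureTheory

theorem my_hasDerivAt_abs_rpow {q : ℝ} (hq : 1 < q) (t : ℝ) :
    HasDerivAt (fun s : ℝ => |s| ^ q) (q * Real.sign t * |t| ^ (q - 1)) t := by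
  rcases lt_trichotomy t 0 with ht | rfl | ht
  · have h1 : HasDerivAt (fun s : ℝ => (-s) ^ q) ((q * (-t) ^ (q - 1)) * (-1)) t := by
      have := (Real.hasDerivAt_rpow_const (x := -t) (p := q) (Or.inl (by linarith)))
      exact this.comp t ((hasDerivAt_id t).neg)
    have h2 : (fun s : ℝ => |s| ^ q) =ᶠ[nhds t] (fun s : ℝ => (-s) ^ q) := by
      filter_upwards [Iio_mem_nhds ht] with s hs
      rw [abs_of_neg hs]
    rw [Real.sign_of_neg ht, abs_of_neg ht]
    have := h1.congr_of_eventuallyEq h2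
    refine this.congr_deriv ?_
    ring
  · rw [Real.sign_zero]
    simp only [mul_zero, zero_mul]
    rw [hasDerivAt_iff_tendsto_slope]
    have hbound : ∀ s : ℝ, s ≠ 0 → ‖slope (fun s : ℝ => |s| ^ q) 0 s‖ ≤ |s| ^ (q - 1) := by
      intro s hs
      have hs' : (0:ℝ) < |s| := abs_pos.2 hs
      rw [slope_def_field]
      simp only [abs_zero, Real.zero_rpow (by linarith : q ≠ 0), sub_zero, zero_sub, div_eq_mul_inv]
      rw [Real.norm_eq_abs, abs_mul, abs_inv,
        abs_of_nonneg (Real.rpow_nonneg (abs_nonneg s) q)]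
      rw [← Real.rpow_neg_one |s|, ← Real.rpow_add hs']
      ring_nf
      exact le_refl _
    have hlim : Filter.Tendsto (fun s : ℝ => |s| ^ (q - 1)) (nhdsWithin 0 {(0:ℝ)}ᶜ) (nhds 0) := by
      have : Filter.Tendsto (fun s : ℝ => |s| ^ (q - 1)) (nhds 0) (nhds (|(0:ℝ)| ^ (q - 1))) := by
        exact (continuous_abs.rpow_const (fun s => Or.inr (by linarith))).tendsto 0
      simpa [Real.zero_rpow (by linarith : q - 1 ≠ 0)] using this.mono_left nhdsWithin_le_nhds
    refine squeeze_zero_norm' ?_ hlim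
    filter_upwards [self_mem_nhdsWithin] with s hs
    exact hbound s hs
  · have h1 : HasDerivAt (fun s : ℝ => s ^ q) (q * t ^ (q - 1)) t :=
      Real.hasDerivAt_rpow_const (Or.inl ht.ne')
    have h2 : (fun s : ℝ => |s| ^ q) =ᶠ[nhds t] (fun s : ℝ => s ^ q) := by
      filter_upwards [Ioi_mem_nhds ht] with s hs
      rw [abs_of_pos hs]
    rw [Real.sign_of_pos ht, abs_of_pos ht]
    have := h1.congr_of_eventuallyEq h2
    refine this.congr_deriv ?_
    ring

theorem my_mul_sign_rpow {q : ℝ} (hq : 1 < q) (t : ℝ) :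
    t * (q * Real.sign t * |t| ^ (q - 1)) = q * |t| ^ q := by
  rcases eq_or_ne t 0 with rfl | ht
  · simp [Real.zero_rpow (by linarith : q ≠ 0)]
  · have h1 : t * Real.sign t = |t| := by
      rcases lt_or_gt_of_ne ht with h | h
      · rw [Real.sign_of_neg h, abs_of_neg h]; ring
      · rw [Real.sign_of_pos h, abs_of_pos h]; ring
    have h2 : |t| ^ (q - 1) * |t| = |t| ^ q := by
      nth_rewrite 2 [← Real.rpow_one |t|]
      rw [← Real.rpow_add (abs_pos.2 ht)]
      ring_nf
    calc t * (q * Real.sign t * |t| ^ (q - 1)) = q * (|t| ^ (q-1) * |t|) := by rw [← h1]; ring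
    _ = q * |t| ^ q := by rw [h2]

noncomputable def myG (n : ℕ) (q : ℝ) (y : Fin (n+1) → ℝ) : (Fin (n+1) → ℝ) →L[ℝ] ℝ :=
  ∑ j, (q * Real.sign (y j) * |y j| ^ (q - 1)) •
    ContinuousLinearMap.proj (R := ℝ) (φ := fun _ : Fin (n+1) => ℝ) j

noncomputable def myD (n : ℕ) (q dr : ℝ) (i : Fin (n+1)) (y : Fin (n+1) → ℝ) :
    (Fin (n+1) → ℝ) →L[ℝ] ℝ :=
  y i • ((-dr * (∑ j, |y j| ^ q) ^ (-dr - 1)) • myG n q y)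
    + ((∑ j, |y j| ^ q) ^ (-dr)) • ContinuousLinearMap.proj i

theorem my_hasFDerivAt (n : ℕ) (q dr : ℝ) (hq1 : 1 < q) (i : Fin (n+1))
    (y : Fin (n+1) → ℝ) (hg : 0 < ∑ j, |y j| ^ q) :
    HasFDerivAt (fun z : Fin (n+1) → ℝ => z i / (∑ j, |z j| ^ q) ^ dr)
      (myD n q dr i y) y := by
  have hG : HasFDerivAt (fun z : Fin (n+1) → ℝ => ∑ j, |z j| ^ q) (myG n q y) y :=
    HasFDerivAt.fun_sum fun j _ =>
      (my_hasDerivAt_abs_rpow hq1 (y j)).comp_hasFDerivAt (𝕜 := ℝ) (f := fun z : Fin (n+1) → ℝ => z j) y (hasFDerivAt_apply (𝕜 := ℝ) j y)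
  have hden : HasFDerivAt (fun z : Fin (n+1) → ℝ => (∑ j, |z j| ^ q) ^ (-dr))
      ((-dr * (∑ j, |y j| ^ q) ^ (-dr - 1)) • myG n q y) y :=
    (Real.hasDerivAt_rpow_const (p := -dr) (Or.inl hg.ne')).comp_hasFDerivAt (𝕜 := ℝ) (f := fun z : Fin (n+1) → ℝ => ∑ j, |z j| ^ q) y hG
  have hmul := (hasFDerivAt_apply i y).mul hden
  have heq : (fun z : Fin (n+1) → ℝ => z i / (∑ j, |z j| ^ q) ^ dr)
      = fun z : Fin (n+1) → ℝ => z i * (∑ j, |z j| ^ q) ^ (-dr) := by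
    funext z
    rw [Real.rpow_neg (Finset.sum_nonneg fun j _ => Real.rpow_nonneg (abs_nonneg _) q),
      div_eq_mul_inv]
  rw [heq]
  exact hmul

theorem my_div_sum_zero (n : ℕ) (q dr : ℝ) (hq1 : 1 < q) (hqd : q * dr = dr + 1)
    (hdr : ((n : ℝ) + 1) = dr + 1)
    (y : Fin (n+1) → ℝ) (hg : 0 < ∑ j, |y j| ^ q) :
    ∑ i, (myD n q dr i y) (Pi.single i 1) = 0 := by
  set g := ∑ j, |y j| ^ q with hgdef
  have hGval : ∀ i, (myG n q y) (Pi.single i (1:ℝ)) = q * Real.sign (y i) * |y i| ^ (q - 1) := by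
    intro i
    simp only [myG, ContinuousLinearMap.sum_apply, ContinuousLinearMap.smul_apply,
      ContinuousLinearMap.proj_apply, smul_eq_mul, Pi.single_apply]
    simp [Finset.sum_ite_eq', mul_ite]
  have hterm : ∀ i, (myD n q dr i y) (Pi.single i 1)
      = -dr * g ^ (-dr - 1) * (q * |y i| ^ q) + g ^ (-dr) := by
    intro i
    simp only [myD, ContinuousLinearMap.add_apply, ContinuousLinearMap.smul_apply,
      ContinuousLinearMap.proj_apply, smul_eq_mul, Pi.single_eq_same, hGval i, ← hgdef]
    rw [show y i * (-dr * g ^ (-dr - 1) * (q * Real.sign (y i) * |y i| ^ (q - 1)))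
        = -dr * g ^ (-dr - 1) * (y i * (q * Real.sign (y i) * |y i| ^ (q - 1))) by ring,
      my_mul_sign_rpow hq1, mul_one]
  rw [Finset.sum_congr rfl fun i _ => hterm i]
  rw [Finset.sum_add_distrib, Finset.sum_const, Finset.card_univ, Fintype.card_fin]
  have h1 : ∑ i, -dr * g ^ (-dr - 1) * (q * |y i| ^ q)
      = -dr * g ^ (-dr - 1) * q * g := by
    rw [Finset.sum_congr rfl fun i (_ : i ∈ Finset.univ) =>
      (show -dr * g ^ (-dr - 1) * (q * |y i| ^ q)
        = -dr * g ^ (-dr - 1) * q * |y i| ^ q by ring), ← Finset.mul_sum, ← hgdef]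
  rw [h1]
  have hgp : g ^ (-dr - 1) * g = g ^ (-dr) := by
    nth_rewrite 2 [show -dr = -dr - 1 + 1 by ring]
    rw [Real.rpow_add_one hg.ne']
  have hB : (0:ℝ) ≤ g ^ (-dr) := Real.rpow_nonneg hg.le _
  rw [nsmul_eq_mul]
  push_cast
  linear_combination (-dr * q) * hgp + (g ^ (-dr)) * hdr - (g ^ (-dr)) * hqd

theorem my_flux_change (n : ℕ) (Θi : (Fin (n+1) → ℝ) → ℝ) (A B : Fin (n+1) → ℝ)
    (i : Fin (n+1)) (c : ℝ) :
    (∫ w : {j : Fin (n+1) // j ≠ i} → ℝ in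
        Set.univ.pi (fun j : {j : Fin (n+1) // j ≠ i} => Set.Icc (A j.1) (B j.1)),
        Θi (fun k => if hk : k = i then c else w ⟨k, hk⟩)) =
      ∫ z : Fin n → ℝ in Set.Icc (A ∘ i.succAbove) (B ∘ i.succAbove), Θi (i.insertNth c z) := by
  have hmp := MeasureTheory.volume_measurePreserving_piCongrLeft
      (fun _ : {j : Fin (n+1) // j ≠ i} => ℝ) (finSuccAboveEquiv i)
  rw [← hmp.setIntegral_preimage_emb (MeasurableEquiv.measurableEmbedding _)]
  have hset : (⇑(MeasurableEquiv.piCongrLeft (fun _ : {j : Fin (n+1) // j ≠ i} => ℝ)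
        (finSuccAboveEquiv i))) ⁻¹'
      (Set.univ.pi fun j : {j : Fin (n+1) // j ≠ i} => Set.Icc (A j.1) (B j.1)) =
      Set.Icc (A ∘ i.succAbove) (B ∘ i.succAbove) := by
    rw [MeasurableEquiv.coe_piCongrLeft, Equiv.piCongrLeft_preimage_univ_pi, ← Set.pi_univ_Icc]
    congr 1
  rw [hset]
  refine setIntegral_congr_fun measurableSet_Icc fun z hz => ?_
  congr 1
  funext k
  by_cases hk : k = i
  · subst hk; simp
  · obtain ⟨j, rfl⟩ := Fin.exists_succAbove_eq hk
    rw [dif_neg hk, Fin.insertNth_apply_succAbove]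
    have h1 : (⟨i.succAbove j, hk⟩ : {k : Fin (n+1) // k ≠ i}) = finSuccAboveEquiv i j := by
      rw [finSuccAboveEquiv_apply]
    rw [h1]
    exact MeasurableEquiv.piCongrLeft_apply_apply (β := fun _ : {k : Fin (n+1) // k ≠ i} => ℝ) (finSuccAboveEquiv i) z j

/-- The discretization of the divergence-free field Θ(x) = x/|x|_q^d (with q = d/(d-1),
so |x|_q^d = (∑_j |x_j|^q)^(d-1)) obtained by integrating its flux through the faces of
unit cubes centered at lattice points satisfies the node law on ℤ^d \ {0}. -/
theorem discretized_flow_node_law (d : ℕ) (hd : 2 ≤ d) (q : ℝ)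
    (hq : q = d / ((d : ℝ) - 1))
    (Θ : Fin d → (Fin d → ℝ) → ℝ)
    (hΘ : ∀ (i : Fin d) (y : Fin d → ℝ), Θ i y = y i / (∑ j, |y j| ^ q) ^ ((d : ℝ) - 1))
    (flux : (Fin d → ℤ) → Fin d → ℝ → ℝ)
    (hflux : ∀ (x : Fin d → ℤ) (i : Fin d) (s : ℝ),
      flux x i s =
        ∫ w : {j : Fin d // j ≠ i} → ℝ in
          Set.univ.pi (fun j : {j : Fin d // j ≠ i} =>
            Set.Icc ((x j.1 : ℝ) - 1 / 2) ((x j.1 : ℝ) + 1 / 2)),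
          Θ i (fun k => if hk : k = i then s else w ⟨k, hk⟩)) :
    ∀ x : Fin d → ℤ, x ≠ 0 →
      ∑ i, (flux x i ((x i : ℝ) + 1 / 2) - flux x i ((x i : ℝ) - 1 / 2)) = 0 := by
  obtain ⟨n, rfl⟩ : ∃ n, d = n + 1 := ⟨d - 1, by omega⟩
  intro x hx
  have hn : 1 ≤ n := by omega
  set dr : ℝ := (((n + 1 : ℕ) : ℝ)) - 1 with hdrdef
  have hdrn : dr = (n : ℝ) := by rw [hdrdef]; push_cast; ring
  have hnpos : (0 : ℝ) < n := by exact_mod_cast hn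
  have hqval : q = ((n : ℝ) + 1) / n := by
    rw [hq, hdrdef] at *
    push_cast
    ring_nf
  have hq1 : 1 < q := by
    rw [hqval]
    rw [lt_div_iff₀ hnpos]
    linarith
  have hqd : q * dr = dr + 1 := by
    rw [hqval, hdrn]
    field_simp
  have hdr1 : ((n : ℝ) + 1) = dr + 1 := by rw [hdrn]
  -- the box
  set a : Fin (n+1) → ℝ := fun i => (x i : ℝ) - 1 / 2 with ha
  set b : Fin (n+1) → ℝ := fun i => (x i : ℝ) + 1 / 2 with hb
  have hle : a ≤ b := fun i => by simp only [ha, hb]; linarith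
  -- positivity of the norm sum on the box
  have hgpos : ∀ y ∈ Set.Icc a b, 0 < ∑ j, |y j| ^ q := by
    intro y hy
    obtain ⟨i0, hi0⟩ := Function.ne_iff.mp hx
    have hxi0 : (1 : ℝ) ≤ |(x i0 : ℝ)| := by
      have : 1 ≤ |x i0| := Int.one_le_abs (by simpa using hi0)
      calc (1:ℝ) = ((1:ℤ):ℝ) := by norm_num
      _ ≤ ((|x i0| : ℤ) : ℝ) := by exact_mod_cast this
      _ = |(x i0 : ℝ)| := by push_cast; ring
    have h1 : a i0 ≤ y i0 := hy.1 i0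
    have h2 : y i0 ≤ b i0 := hy.2 i0
    have hsub : |(x i0 : ℝ) - y i0| ≤ 1 / 2 := by
      rw [abs_le]
      constructor <;> simp only [ha, hb] at h1 h2 <;> linarith
    have habs : (1:ℝ)/2 ≤ |y i0| := by
      have := abs_sub_abs_le_abs_sub ((x i0 : ℝ)) (y i0)
      linarith
    have hpos : 0 < |y i0| ^ q := Real.rpow_pos_of_pos (by linarith) q
    calc (0:ℝ) < |y i0| ^ q := hpos
    _ ≤ ∑ j, |y j| ^ q :=
      Finset.single_le_sum (f := fun j => |y j| ^ q)
        (fun j _ => Real.rpow_nonneg (abs_nonneg _) _) (Finset.mem_univ i0)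
  have hΘ' : ∀ i, Θ i = fun y : Fin (n+1) → ℝ => y i / (∑ j, |y j| ^ q) ^ dr := by
    intro i; funext y; rw [hΘ]
  -- continuity
  have Hc : ∀ i, ContinuousOn (Θ i) (Set.Icc a b) := by
    intro i
    rw [hΘ' i]
    apply ContinuousOn.div
    · exact (continuous_apply i).continuousOn
    · apply ContinuousOn.rpow_const
      · apply Continuous.continuousOn
        exact continuous_finset_sum _ fun j _ =>
          ((continuous_apply j).abs).rpow_const (fun y => Or.inr (by linarith))
      · exact fun y hy => Or.inl (hgpos y hy).ne'
    · exact fun y hy => (Real.rpow_pos_of_pos (hgpos y hy) dr).ne'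
  -- differentiability
  have Hd : ∀ y ∈ (Set.univ.pi fun i => Set.Ioo (a i) (b i)) \ (∅ : Set (Fin (n+1) → ℝ)),
      ∀ i, HasFDerivAt (Θ i) (myD n q dr i y) y := by
    intro y hy i
    have hyIcc : y ∈ Set.Icc a b := by
      constructor <;> intro j
      · exact (hy.1 j (Set.mem_univ j)).1.le
      · exact (hy.1 j (Set.mem_univ j)).2.le
    rw [hΘ' i]
    exact my_hasFDerivAt n q dr hq1 i y (hgpos y hyIcc)
  -- integrability of the (vanishing) divergence
  have Hzero : Set.EqOn (fun y => ∑ i, (myD n q dr i y) (Pi.single i 1))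
      (fun _ => (0:ℝ)) (Set.Icc a b) := fun y hy =>
    my_div_sum_zero n q dr hq1 hqd hdr1 y (hgpos y hy)
  have Hi : IntegrableOn (fun y => ∑ i, (myD n q dr i y) (Pi.single i 1))
      (Set.Icc a b) volume := by
    rw [integrableOn_congr_fun Hzero measurableSet_Icc]
    exact integrableOn_zero
  have KEY := MeasureTheory.integral_divergence_of_hasFDerivAt_off_countable' a b hle
    (fun i => Θ i) (fun i y => myD n q dr i y) ∅ Set.countable_empty Hc Hd Hi
  rw [setIntegral_congr_fun measurableSet_Icc Hzero, integral_zero] at KEY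
  have hfront : ∀ i, flux x i ((x i : ℝ) + 1 / 2)
      = ∫ z : Fin n → ℝ in Set.Icc (a ∘ i.succAbove) (b ∘ i.succAbove),
          Θ i (i.insertNth (b i) z) := by
    intro i
    rw [hflux]
    exact my_flux_change n (Θ i) a b i (b i)
  have hback : ∀ i, flux x i ((x i : ℝ) - 1 / 2)
      = ∫ z : Fin n → ℝ in Set.Icc (a ∘ i.succAbove) (b ∘ i.succAbove),
          Θ i (i.insertNth (a i) z) := by
    intro i
    rw [hflux]
    exact my_flux_change n (Θ i) a b i (a i)
  calc ∑ i, (flux x i ((x i : ℝ) + 1 / 2) - flux x i ((x i : ℝ) - 1 / 2))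
      = ∑ i : Fin (n+1),
        ((∫ z : Fin n → ℝ in Set.Icc (a ∘ i.succAbove) (b ∘ i.succAbove),
            Θ i (i.insertNth (b i) z)) -
          ∫ z : Fin n → ℝ in Set.Icc (a ∘ i.succAbove) (b ∘ i.succAbove),
            Θ i (i.insertNth (a i) z)) := by
        exact Finset.sum_congr rfl fun i _ => by rw [hfront i, hback i]
    _ = 0 := KEY.symm
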